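/- Goldberg's lemma, part (i): Let φ ∈ C_c(ℝ^d) with supp φ ⊂ B(0,1) and ∫φ = 1. There exists C = C(d,φ) > 0 such that for every f ∈ L¹(ℝ^d), the convolution φ*f lies in the local Hardy space h¹(ℝ^d) and ‖φ*f‖_{h¹} ≤ C ‖f‖_{L¹}. -/

import Mathlib

open MeasureTheory Metric Filter Topology

/-- Euclidean space `ℝ^d`. -/
noncomputable abbrev Euc (d : ℕ) := EuclideanSpace ℝ (Fin d)

/-- Convolution `(f * g)(x) = ∫ f(y) g(x - y) dy`. -/
noncomputable def conv {d : ℕ} (f g : Euc d → ℝ) (x : Euc d) : ℝ :=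
  ∫ y, f y * g (x - y)

/-- Dilation `ψ_t(x) = t^{-d} ψ(x/t)`. -/
noncomputable def dilate {d : ℕ} (ψ : Euc d → ℝ) (t : ℝ) (x : Euc d) : ℝ :=
  t ^ (-(d : ℝ)) * ψ (t⁻¹ • x)

/-- The class `𝒜` of Schwartz functions with `|ψ(x)| + |∇ψ(x)| ≤ (1+|x|²)^{-(d+1)}`. -/
def calA (d : ℕ) : Set (Euc d → ℝ) :=
  {ψ | (∃ Ψ : SchwartzMap (Euc d) ℝ, ψ = Ψ) ∧
    ∀ x, |ψ x| + ‖fderiv ℝ ψ x‖ ≤ (1 + ‖x‖ ^ 2) ^ (-((d : ℝ) + 1))}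

/-- Grand maximal function `𝔐f(x) = sup_{ψ ∈ 𝒜} sup_{|y-x| < t} |f*ψ_t(y)|`. -/
noncomputable def grandMax {d : ℕ} (f : Euc d → ℝ) (x : Euc d) : ℝ :=
  sSup {r | ∃ ψ ∈ calA d, ∃ t, 0 < t ∧ ∃ y, dist y x < t ∧ r = |conv f (dilate ψ t) y|}

/-- Local grand maximal function `𝔪f(x) = sup_{ψ ∈ 𝒜} sup_{|y-x| < t < 1} |f*ψ_t(y)|`. -/
noncomputable def locMax {d : ℕ} (f : Euc d → ℝ) (x : Euc d) : ℝ :=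
  sSup {r | ∃ ψ ∈ calA d, ∃ t, 0 < t ∧ t < 1 ∧ ∃ y, dist y x < t ∧ r = |conv f (dilate ψ t) y|}

/-- `f ∈ H¹(ℝ^d)`. -/
def MemH1 {d : ℕ} (f : Euc d → ℝ) : Prop := Integrable f ∧ Integrable (grandMax f)

/-- `‖f‖_{H¹} = ‖𝔐f‖_{L¹}`. -/
noncomputable def H1norm {d : ℕ} (f : Euc d → ℝ) : ℝ := ∫ x, |grandMax f x|

/-- `f ∈ h¹(ℝ^d)`. -/
def Memh1 {d : ℕ} (f : Euc d → ℝ) : Prop := Integrable f ∧ Integrable (locMax f)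

/-- `‖f‖_{h¹} = ‖𝔪f‖_{L¹}`. -/
noncomputable def h1norm {d : ℕ} (f : Euc d → ℝ) : ℝ := ∫ x, |locMax f x|

/-- Mean of `f` over the ball `B(c,r)`. -/
noncomputable def ballAvg {d : ℕ} (f : Euc d → ℝ) (c : Euc d) (r : ℝ) : ℝ :=
  (volume (ball c r)).toReal⁻¹ * ∫ x in ball c r, f x

/-- Mean oscillation of `f` over the ball `B(c,r)`. -/
noncomputable def osc {d : ℕ} (f : Euc d → ℝ) (c : Euc d) (r : ℝ) : ℝ :=
  (volume (ball c r)).toReal⁻¹ * ∫ x in ball c r, |f x - ballAvg f c r|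

/-- Mean of `|f|` over the ball `B(c,r)`. -/
noncomputable def avgAbs {d : ℕ} (f : Euc d → ℝ) (c : Euc d) (r : ℝ) : ℝ :=
  (volume (ball c r)).toReal⁻¹ * ∫ x in ball c r, |f x|

/-- `‖f‖_{BMO}`. -/
noncomputable def BMOnorm {d : ℕ} (f : Euc d → ℝ) : ℝ :=
  sSup {s | ∃ c : Euc d, ∃ r, 0 < r ∧ s = osc f c r}

/-- `‖f‖_{bmo}`: oscillation over small balls plus averages of `|f|` over big balls. -/
noncomputable def bmoNorm {d : ℕ} (f : Euc d → ℝ) : ℝ :=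
  sSup {s | ∃ c : Euc d, ∃ r, 0 < r ∧ volume (ball c r) ≤ 1 ∧ s = osc f c r} +
  sSup {s | ∃ c : Euc d, ∃ r, 0 < r ∧ 1 ≤ volume (ball c r) ∧ s = avgAbs f c r}

/-- `f ∈ BMO(ℝ^d)`. -/
def MemBMO {d : ℕ} (f : Euc d → ℝ) : Prop :=
  LocallyIntegrable f volume ∧ ∃ M : ℝ, ∀ c r, 0 < r → osc f c r ≤ M

/-- `f ∈ bmo(ℝ^d)`. -/
def Membmo {d : ℕ} (f : Euc d → ℝ) : Prop :=
  LocallyIntegrable f volume ∧ ∃ M : ℝ, ∀ c r, 0 < r →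
    (volume (ball c r) ≤ 1 → osc f c r ≤ M) ∧ (1 ≤ volume (ball c r) → avgAbs f c r ≤ M)

/-- Continuous functions with compact support, `C_c(ℝ^d)`. -/
def CcFun (d : ℕ) : Set (Euc d → ℝ) := {φ | Continuous φ ∧ HasCompactSupport φ}

/-- `vmo(ℝ^d)`: the closure of `C_c(ℝ^d)` in the `bmo` norm. -/
def vmoSet (d : ℕ) : Set (Euc d → ℝ) :=
  {φ | Membmo φ ∧ ∀ ε : ℝ, 0 < ε → ∃ g ∈ CcFun d, bmoNorm (φ - g) < ε}

/-- `VMO(ℝ^d)`: the closure of `C_c(ℝ^d)` in the `BMO` norm. -/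
def VMOSet (d : ℕ) : Set (Euc d → ℝ) :=
  {φ | MemBMO φ ∧ ∀ ε : ℝ, 0 < ε → ∃ g ∈ CcFun d, BMOnorm (φ - g) < ε}

/-- Integral of `φ` against a finite signed measure `μ`. -/
noncomputable def smInt {d : ℕ} (μ : MeasureTheory.SignedMeasure (Euc d)) (φ : Euc d → ℝ) : ℝ :=
  (∫ x, φ x ∂μ.toJordanDecomposition.posPart) - ∫ x, φ x ∂μ.toJordanDecomposition.negPart

/-- Convolution `(φ * μ)(x) = ∫ φ(x - y) dμ(y)` of a function with a signed measure. -/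
noncomputable def convSM {d : ℕ} (φ : Euc d → ℝ) (μ : MeasureTheory.SignedMeasure (Euc d))
    (x : Euc d) : ℝ :=
  smInt μ (fun y => φ (x - y))

/-- Sup norm. -/
noncomputable def supNorm {d : ℕ} (φ : Euc d → ℝ) : ℝ := ⨆ x, |φ x|

section Aux
variable {d : ℕ}

lemma conv_eq_convolution (f g : Euc d → ℝ) :
    conv f g = convolution f g (ContinuousLinearMap.mul ℝ ℝ) volume := rfl

lemma calA_abs_le {ψ : Euc d → ℝ} (h : ψ ∈ calA d) (x : Euc d) :
    |ψ x| ≤ (1 + ‖x‖ ^ 2) ^ (-((d : ℝ) + 1)) := by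
  have := h.2 x
  have h0 : (0:ℝ) ≤ ‖fderiv ℝ ψ x‖ := norm_nonneg _
  linarith

lemma calA_abs_le_one {ψ : Euc d → ℝ} (h : ψ ∈ calA d) (x : Euc d) : |ψ x| ≤ 1 := by
  refine (calA_abs_le h x).trans ?_
  apply Real.rpow_le_one_of_one_le_of_nonpos
  · nlinarith [sq_nonneg ‖x‖]
  · have : (0:ℝ) ≤ (d:ℝ) := Nat.cast_nonneg d
    linarith

lemma calA_continuous {ψ : Euc d → ℝ} (h : ψ ∈ calA d) : Continuous ψ := by
  obtain ⟨Ψ, rfl⟩ := h.1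
  exact Ψ.continuous

lemma calA_integrable {ψ : Euc d → ℝ} (h : ψ ∈ calA d) : Integrable ψ := by
  obtain ⟨Ψ, rfl⟩ := h.1
  exact Ψ.integrable

lemma abs_dilate {ψ : Euc d → ℝ} {t : ℝ} (ht : 0 < t) (x : Euc d) :
    |dilate ψ t x| = t ^ (-(d : ℝ)) * |ψ (t⁻¹ • x)| := by
  rw [dilate, abs_mul, abs_of_pos (Real.rpow_pos_of_pos ht _)]

lemma dilate_continuous {ψ : Euc d → ℝ} (h : ψ ∈ calA d) (t : ℝ) :
    Continuous (dilate ψ t) :=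
  continuous_const.mul ((calA_continuous h).comp (continuous_const_smul t⁻¹))

lemma dilate_integrable {ψ : Euc d → ℝ} (h : ψ ∈ calA d) {t : ℝ} (ht : 0 < t) :
    Integrable (dilate ψ t) := by
  refine Integrable.const_mul ?_ _
  exact (calA_integrable h).comp_smul (inv_ne_zero ht.ne')

lemma abs_dilate_le {ψ : Euc d → ℝ} (h : ψ ∈ calA d) {t : ℝ} (ht : 0 < t) (x : Euc d) :
    |dilate ψ t x| ≤ t ^ (-(d : ℝ)) := by
  rw [abs_dilate ht]
  calc t ^ (-(d : ℝ)) * |ψ (t⁻¹ • x)| ≤ t ^ (-(d : ℝ)) * 1 := by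
        exact mul_le_mul_of_nonneg_left (calA_abs_le_one h _) (Real.rpow_pos_of_pos ht _).le
    _ = t ^ (-(d : ℝ)) := mul_one _

lemma integral_abs_dilate {ψ : Euc d → ℝ} {t : ℝ} (ht : 0 < t) :
    ∫ x, |dilate ψ t x| = ∫ x, |ψ x| := by
  have : (fun x => |dilate ψ t x|) = fun x => t ^ (-(d : ℝ)) * |ψ (t⁻¹ • x)| := by
    ext x; exact abs_dilate ht x
  rw [this, integral_const_mul,
    MeasureTheory.Measure.integral_comp_inv_smul_of_nonneg volume (fun x => |ψ x|) ht.le]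
  rw [finrank_euclideanSpace_fin, smul_eq_mul, ← mul_assoc]
  rw [← Real.rpow_natCast t d, ← Real.rpow_add ht]
  norm_num

end Aux

section Aux2
variable {d : ℕ}

lemma integrable_pk : Integrable (fun x : Euc d => (1 + ‖x‖ ^ 2) ^ (-((d : ℝ) + 1))) := by
  have h := integrable_rpow_neg_one_add_norm_sq (μ := (volume : Measure (Euc d)))
    (r := 2 * (d:ℝ) + 2) (by rw [finrank_euclideanSpace_fin]; push_cast; linarith)
  convert h using 2 with x
  ring_nf

lemma integral_abs_calA_le {ψ : Euc d → ℝ} (h : ψ ∈ calA d) :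
    ∫ x, |ψ x| ≤ ∫ x : Euc d, (1 + ‖x‖ ^ 2) ^ (-((d : ℝ) + 1)) := by
  refine integral_mono (calA_integrable h).abs integrable_pk ?_
  exact fun x => calA_abs_le h x

lemma dilate_decay {ψ : Euc d → ℝ} (h : ψ ∈ calA d) {t : ℝ} (ht0 : 0 < t) (ht1 : t ≤ 1)
    {r : Euc d} (hr : 1 ≤ ‖r‖) :
    |dilate ψ t r| ≤ ‖r‖ ^ (-(2 * (d : ℝ) + 2)) := by
  have hrpos : (0:ℝ) < ‖r‖ := lt_of_lt_of_le one_pos hr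
  have hs : ‖t⁻¹ • r‖ = t⁻¹ * ‖r‖ := by
    rw [norm_smul, Real.norm_eq_abs, abs_of_pos (inv_pos.2 ht0)]
  have hspos : (0:ℝ) < t⁻¹ * ‖r‖ := mul_pos (inv_pos.2 ht0) hrpos
  have h1 : |ψ (t⁻¹ • r)| ≤ (1 + ‖t⁻¹ • r‖ ^ 2) ^ (-((d : ℝ) + 1)) := calA_abs_le h _
  have h2 : (1 + ‖t⁻¹ • r‖ ^ 2) ^ (-((d : ℝ) + 1)) ≤ (‖t⁻¹ • r‖ ^ 2) ^ (-((d : ℝ) + 1)) := by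
    apply Real.rpow_le_rpow_of_nonpos
    · rw [hs]; positivity
    · nlinarith
    · have : (0:ℝ) ≤ (d:ℝ) := Nat.cast_nonneg d
      linarith
  have h3 : (‖t⁻¹ • r‖ ^ 2) ^ (-((d : ℝ) + 1)) = (t⁻¹ * ‖r‖) ^ (-(2 * (d:ℝ) + 2)) := by
    rw [hs, ← Real.rpow_natCast (t⁻¹ * ‖r‖) 2, ← Real.rpow_mul hspos.le]
    norm_num
    ring_nf
  have h4 : (t⁻¹ * ‖r‖) ^ (-(2 * (d:ℝ) + 2)) =
      t ^ (2 * (d:ℝ) + 2) * ‖r‖ ^ (-(2 * (d:ℝ) + 2)) := by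
    rw [Real.mul_rpow (inv_pos.2 ht0).le hrpos.le, Real.inv_rpow ht0.le,
      Real.rpow_neg ht0.le, inv_inv]
  calc |dilate ψ t r| = t ^ (-(d : ℝ)) * |ψ (t⁻¹ • r)| := abs_dilate ht0 r
    _ ≤ t ^ (-(d : ℝ)) * ((t⁻¹ * ‖r‖) ^ (-(2 * (d:ℝ) + 2))) := by
        refine mul_le_mul_of_nonneg_left ((h1.trans h2).trans_eq h3)
          (Real.rpow_pos_of_pos ht0 _).le
    _ = t ^ ((d:ℝ) + 2) * ‖r‖ ^ (-(2 * (d:ℝ) + 2)) := by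
        rw [h4, ← mul_assoc, ← Real.rpow_add ht0]; ring_nf
    _ ≤ 1 * ‖r‖ ^ (-(2 * (d:ℝ) + 2)) := by
        refine mul_le_mul_of_nonneg_right ?_ (Real.rpow_nonneg hrpos.le _)
        exact Real.rpow_le_one ht0.le ht1 (by positivity)
    _ = ‖r‖ ^ (-(2 * (d:ℝ) + 2)) := one_mul _

end Aux2
section Aux3
variable {d : ℕ}

lemma kernel_bound {φ : Euc d → ℝ} (hc : Continuous φ) (hcs : HasCompactSupport φ)
    (hsupp : tsupport φ ⊆ ball (0 : Euc d) 1) :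
    ∃ A : ℝ, 1 ≤ A ∧ ∀ ψ ∈ calA d, ∀ t : ℝ, 0 < t → t < 1 → ∀ a v : Euc d, ‖a - v‖ ≤ 1 →
      (∫ w, |φ w| * |dilate ψ t (a - w)|) ≤ A * (1 + ‖v‖) ^ (-(2 * (d : ℝ) + 2)) := by
  obtain ⟨M, hM⟩ := hcs.exists_bound_of_continuous hc
  set M' : ℝ := max M 0 with hM'def
  have hM'0 : 0 ≤ M' := le_max_right _ _
  have hM' : ∀ x, |φ x| ≤ M' := fun x => (hM x).trans (le_max_left _ _)
  set c : ℝ := 2 * (d : ℝ) + 2 with hcdef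
  have hcpos : 0 < c := by positivity
  set C2 : ℝ := ∫ x : Euc d, (1 + ‖x‖ ^ 2) ^ (-((d : ℝ) + 1)) with hC2def
  have hC20 : 0 ≤ C2 := integral_nonneg fun x => Real.rpow_nonneg (by positivity) _
  have hφint : Integrable φ := hc.integrable_of_hasCompactSupport hcs
  set Iφ : ℝ := ∫ w, |φ w| with hIφdef
  have hIφ0 : 0 ≤ Iφ := integral_nonneg fun w => abs_nonneg _
  have h4c : (0:ℝ) < (4:ℝ) ^ c := Real.rpow_pos_of_pos (by norm_num) c
  have h6c : (0:ℝ) < (6:ℝ) ^ c := Real.rpow_pos_of_pos (by norm_num) c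
  refine ⟨4 ^ c * (M' * C2) + 6 ^ c * Iφ + 1, ?_, ?_⟩
  · nlinarith [mul_nonneg hM'0 hC20, mul_nonneg h6c.le hIφ0, mul_nonneg h4c.le (mul_nonneg hM'0 hC20)]
  intro ψ hψ t ht0 ht1 a v hav
  set B : ℝ := (1 + ‖v‖) ^ (-c) with hBdef
  have hB : 0 < B := Real.rpow_pos_of_pos (by positivity) _
  have hint_dil : Integrable fun w => |dilate ψ t (a - w)| :=
    ((dilate_integrable hψ ht0).abs).comp_sub_left a
  have habs : Integrable fun w => |φ w| * |dilate ψ t (a - w)| := by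
    refine Integrable.bdd_mul (c := M') hint_dil hc.abs.aestronglyMeasurable (Eventually.of_forall fun x => ?_)
    rw [Real.norm_eq_abs, abs_abs]; exact hM' x
  by_cases hv : ‖v‖ ≤ 3
  · -- case small v
    have step1 : (∫ w, |φ w| * |dilate ψ t (a - w)|) ≤ M' * C2 := by
      calc (∫ w, |φ w| * |dilate ψ t (a - w)|)
          ≤ ∫ w, M' * |dilate ψ t (a - w)| := by
            refine integral_mono habs (hint_dil.const_mul M') fun w => ?_
            exact mul_le_mul_of_nonneg_right (hM' w) (abs_nonneg _)
        _ = M' * ∫ w, |dilate ψ t (a - w)| := integral_const_mul _ _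
        _ = M' * ∫ w, |dilate ψ t w| := by
            rw [integral_sub_left_eq_self (fun w => |dilate ψ t w|) volume a]
        _ = M' * ∫ w, |ψ w| := by rw [integral_abs_dilate ht0]
        _ ≤ M' * C2 := mul_le_mul_of_nonneg_left (integral_abs_calA_le hψ) hM'0
    have h4B : (4:ℝ) ^ (-c) ≤ B := by
      refine Real.rpow_le_rpow_of_nonpos (by positivity) (by linarith) (by linarith)
    have e1 : (4:ℝ) ^ c * (4:ℝ) ^ (-c) = 1 := by
      rw [← Real.rpow_add (by norm_num)]; simp
    have h5 : 4 ^ c * (M' * C2) * (4:ℝ) ^ (-c) ≤ 4 ^ c * (M' * C2) * B :=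
      mul_le_mul_of_nonneg_left h4B (by positivity)
    have h6 : 4 ^ c * (M' * C2) * (4:ℝ) ^ (-c) = M' * C2 := by
      rw [mul_comm ((4:ℝ) ^ c) (M' * C2), mul_assoc, e1, mul_one]
    have h7 : 0 ≤ (6 ^ c * Iφ + 1) * B := by positivity
    nlinarith
  · -- case large v
    push_neg at hv
    have hpt : ∀ w, |φ w| * |dilate ψ t (a - w)| ≤ |φ w| * (6 ^ c * B) := by
      intro w
      by_cases hw : φ w = 0
      · simp [hw]
      · have hw1 : ‖w‖ < 1 := by
          have hmem : w ∈ tsupport φ := subset_closure (by exact hw)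
          simpa [mem_ball, dist_zero_right] using hsupp hmem
        have hveq : v = ((a - w) - (a - v)) + w := by abel
        have htri : ‖v‖ ≤ ‖a - w‖ + ‖a - v‖ + ‖w‖ := by
          calc ‖v‖ = ‖((a - w) - (a - v)) + w‖ := by rw [← hveq]
            _ ≤ ‖(a - w) - (a - v)‖ + ‖w‖ := norm_add_le _ _
            _ ≤ (‖a - w‖ + ‖a - v‖) + ‖w‖ := by
                exact add_le_add_left (norm_sub_le _ _) _
        have h13 : ‖v‖ / 3 ≤ ‖a - w‖ := by linarith
        have h1aw : 1 ≤ ‖a - w‖ := by linarith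
        have hd := dilate_decay hψ ht0 ht1.le h1aw
        have h2 : ‖a - w‖ ^ (-c) ≤ (‖v‖ / 3) ^ (-c) :=
          Real.rpow_le_rpow_of_nonpos (by linarith) h13 (by linarith)
        have h3 : (‖v‖ / 3) ^ (-c) ≤ ((1 + ‖v‖) / 6) ^ (-c) :=
          Real.rpow_le_rpow_of_nonpos (by linarith) (by linarith) (by linarith)
        have h4 : ((1 + ‖v‖) / 6) ^ (-c) = 6 ^ c * B := by
          rw [div_eq_mul_inv, Real.mul_rpow (by positivity) (by positivity),
            Real.inv_rpow (by norm_num), Real.rpow_neg (by norm_num : (0:ℝ) ≤ 6), inv_inv]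
          ring
        calc |φ w| * |dilate ψ t (a - w)|
            ≤ |φ w| * (‖a - w‖ ^ (-c)) :=
              mul_le_mul_of_nonneg_left hd (abs_nonneg _)
          _ ≤ |φ w| * (6 ^ c * B) := by
              refine mul_le_mul_of_nonneg_left ((h2.trans h3).trans_eq h4) (abs_nonneg _)
    calc (∫ w, |φ w| * |dilate ψ t (a - w)|)
        ≤ ∫ w, |φ w| * (6 ^ c * B) := integral_mono habs (hφint.abs.mul_const _) hpt
      _ = Iφ * (6 ^ c * B) := integral_mul_const _ _
      _ ≤ (4 ^ c * (M' * C2) + 6 ^ c * Iφ + 1) * B := by nlinarith [mul_nonneg (mul_nonneg h4c.le (mul_nonneg hM'0 hC20)) hB.le]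

end Aux3

section Aux4
variable {d : ℕ}

lemma element_bound {φ f : Euc d → ℝ} (hc : Continuous φ) (hcs : HasCompactSupport φ)
    (hf : Integrable f) {A : ℝ}
    (hker : ∀ ψ ∈ calA d, ∀ t : ℝ, 0 < t → t < 1 → ∀ a v : Euc d, ‖a - v‖ ≤ 1 →
      (∫ w, |φ w| * |dilate ψ t (a - w)|) ≤ A * (1 + ‖v‖) ^ (-(2 * (d : ℝ) + 2)))
    {ψ : Euc d → ℝ} (hψ : ψ ∈ calA d) {t : ℝ} (ht0 : 0 < t) (ht1 : t < 1)
    {x y : Euc d} (hyx : dist y x < t) :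
    |conv (conv φ f) (dilate ψ t) y| ≤
      ∫ u, |f u| * (A * (1 + ‖x - u‖) ^ (-(2 * (d : ℝ) + 2))) := by
  set c : ℝ := 2 * (d : ℝ) + 2 with hcdef
  set F : Euc d → ℝ := fun u => |f u| with hFdef
  set Φ : Euc d → ℝ := fun w => |φ w| with hΦdef
  set H : Euc d → ℝ := fun z => |dilate ψ t z| with hHdef
  have hFint : Integrable F := hf.abs
  have hφint : Integrable φ := hc.integrable_of_hasCompactSupport hcs
  have hΦint : Integrable Φ := hφint.abs
  have hHcont : Continuous H := (dilate_continuous hψ t).abs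
  have hHbd : ∀ z, H z ≤ t ^ (-(d : ℝ)) := fun z => abs_dilate_le hψ ht0 z
  have hHnn : ∀ z, 0 ≤ H z := fun z => abs_nonneg _
  set P : Euc d → ℝ := fun z => ∫ w, Φ w * F (z - w) with hPdef
  have hPint : Integrable P :=
    hΦint.integrable_convolution (ContinuousLinearMap.mul ℝ ℝ) hFint
  have hPnn : ∀ z, 0 ≤ P z := fun z =>
    integral_nonneg fun w => mul_nonneg (abs_nonneg _) (abs_nonneg _)
  -- step 1
  have step1 : |conv (conv φ f) (dilate ψ t) y| ≤ ∫ z, |conv φ f z| * H (y - z) := by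
    have : conv (conv φ f) (dilate ψ t) y = ∫ z, conv φ f z * dilate ψ t (y - z) := rfl
    rw [this]
    rw [← Real.norm_eq_abs]
    calc ‖∫ z, conv φ f z * dilate ψ t (y - z)‖
        ≤ ∫ z, ‖conv φ f z * dilate ψ t (y - z)‖ :=
          norm_integral_le_integral_norm _
      _ = ∫ z, |conv φ f z| * H (y - z) := by
          congr 1; ext z; rw [Real.norm_eq_abs, abs_mul]
  -- step 2
  have step2 : ∀ z, |conv φ f z| ≤ P z := by
    intro z
    rw [← Real.norm_eq_abs]
    calc ‖conv φ f z‖ = ‖∫ w, φ w * f (z - w)‖ := rfl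
      _ ≤ ∫ w, ‖φ w * f (z - w)‖ :=
          norm_integral_le_integral_norm _
      _ = P z := by congr 1; ext w; rw [Real.norm_eq_abs, abs_mul]
  -- step 3
  have hPH : Integrable fun z => P z * H (y - z) := by
    have hm : AEStronglyMeasurable (fun z : Euc d => H (y - z)) volume :=
      (hHcont.comp (continuous_const.sub continuous_id)).aestronglyMeasurable
    have hb : Integrable fun z => H (y - z) * P z := by
      refine Integrable.bdd_mul (c := t ^ (-(d : ℝ))) hPint hm (Eventually.of_forall fun z => ?_)
      rw [Real.norm_eq_abs, abs_of_nonneg (hHnn _)]; exact hHbd _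
    exact hb.congr (Eventually.of_forall fun z => mul_comm _ _)
  have step3 : (∫ z, |conv φ f z| * H (y - z)) ≤ ∫ z, P z * H (y - z) := by
    refine integral_mono_of_nonneg ?_ hPH ?_
    · exact Eventually.of_forall fun z => mul_nonneg (abs_nonneg _) (hHnn _)
    · exact Eventually.of_forall fun z =>
        mul_le_mul_of_nonneg_right (step2 z) (hHnn _)
  -- step 4 : Fubini
  have hPalt : ∀ z, P z = ∫ u, F u * Φ (z - u) := by
    intro z
    have h := integral_sub_left_eq_self (fun w => Φ w * F (z - w)) volume z
    calc P z = ∫ u, Φ (z - u) * F (z - (z - u)) := h.symm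
      _ = ∫ u, F u * Φ (z - u) := by congr 1; ext u; rw [sub_sub_cancel, mul_comm]
  have hbase : Integrable (fun p : Euc d × Euc d => F p.2 * Φ (p.1 - p.2))
      (volume.prod volume) :=
    hFint.convolution_integrand (ContinuousLinearMap.mul ℝ ℝ) hΦint
  have hmH : AEStronglyMeasurable (fun p : Euc d × Euc d => H (y - p.1))
      (volume.prod volume) :=
    (hHcont.comp (continuous_const.sub continuous_fst)).aestronglyMeasurable
  have hQ : Integrable (fun p : Euc d × Euc d => F p.2 * Φ (p.1 - p.2) * H (y - p.1))
      (volume.prod volume) := by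
    have hb := Integrable.bdd_mul (c := t ^ (-(d : ℝ))) hbase hmH (Eventually.of_forall fun p => by
      rw [Real.norm_eq_abs, abs_of_nonneg (hHnn _)]; exact hHbd _)
    exact hb.congr (Eventually.of_forall fun p => by ring)
  have step4 : (∫ z, P z * H (y - z)) = ∫ u, F u * ∫ w, Φ w * H (y - u - w) := by
    calc (∫ z, P z * H (y - z))
        = ∫ z, ∫ u, F u * Φ (z - u) * H (y - z) := by
          congr 1; ext z
          rw [hPalt z, ← integral_mul_const]
      _ = ∫ u, ∫ z, F u * Φ (z - u) * H (y - z) := integral_integral_swap hQ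
      _ = ∫ u, F u * ∫ w, Φ w * H (y - u - w) := by
          congr 1; ext u
          calc (∫ z, F u * Φ (z - u) * H (y - z))
              = F u * ∫ z, Φ (z - u) * H (y - z) := by
                rw [← integral_const_mul]
                congr 1; ext z; ring
            _ = F u * ∫ w, Φ w * H (y - u - w) := by
                congr 1
                have h := integral_add_right_eq_self (μ := volume) (fun z => Φ (z - u) * H (y - z)) u
                calc (∫ z, Φ (z - u) * H (y - z))
                    = ∫ w, Φ (w + u - u) * H (y - (w + u)) := h.symm
                  _ = ∫ w, Φ w * H (y - u - w) := by
                      congr 1; ext w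
                      rw [add_sub_cancel_right, sub_add_eq_sub_sub, sub_right_comm]
  -- step 5
  have hyx1 : ∀ u : Euc d, ‖(y - u) - (x - u)‖ ≤ 1 := by
    intro u
    rw [sub_sub_sub_cancel_right, ← dist_eq_norm]
    exact le_of_lt (hyx.trans ht1)
  have hKcont : Continuous fun u : Euc d => A * (1 + ‖x - u‖) ^ (-c) := by
    refine continuous_const.mul ?_
    refine Continuous.rpow_const ?_ fun u => Or.inl (by positivity)
    exact continuous_const.add (continuous_const.sub continuous_id).norm
  have hA0 : 0 ≤ A := by
    have h := hker ψ hψ t ht0 ht1 0 0 (by simp)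
    have h2 : (0:ℝ) ≤ ∫ w, |φ w| * |dilate ψ t (0 - w)| :=
      integral_nonneg fun w => mul_nonneg (abs_nonneg _) (abs_nonneg _)
    have h3 : (0:ℝ) < (1 + ‖(0 : Euc d)‖) ^ (-(2 * (d:ℝ) + 2)) :=
      Real.rpow_pos_of_pos (by positivity) _
    nlinarith
  have hRint : Integrable fun u => F u * (A * (1 + ‖x - u‖) ^ (-c)) := by
    have hb : Integrable fun u => (A * (1 + ‖x - u‖) ^ (-c)) * F u := by
      refine Integrable.bdd_mul (c := A) hFint hKcont.aestronglyMeasurable (Eventually.of_forall fun u => ?_)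
      rw [Real.norm_eq_abs, abs_of_nonneg (by positivity)]
      calc A * (1 + ‖x - u‖) ^ (-c) ≤ A * 1 := by
            refine mul_le_mul_of_nonneg_left ?_ hA0
            refine Real.rpow_le_one_of_one_le_of_nonpos ?_ ?_
            · linarith [norm_nonneg (x - u)]
            · rw [hcdef]; rw [neg_nonpos]; positivity
        _ = A := mul_one A
    exact hb.congr (Eventually.of_forall fun u => mul_comm _ _)
  have step5 : (∫ u, F u * ∫ w, Φ w * H (y - u - w)) ≤
      ∫ u, F u * (A * (1 + ‖x - u‖) ^ (-c)) := by
    refine integral_mono_of_nonneg ?_ hRint ?_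
    · exact Eventually.of_forall fun u => mul_nonneg (abs_nonneg _)
        (integral_nonneg fun w => mul_nonneg (abs_nonneg _) (hHnn _))
    · refine Eventually.of_forall fun u => ?_
      refine mul_le_mul_of_nonneg_left ?_ (abs_nonneg _)
      have h := hker ψ hψ t ht0 ht1 (y - u) (x - u) (hyx1 u)
      calc (∫ w, Φ w * H (y - u - w)) = ∫ w, |φ w| * |dilate ψ t ((y - u) - w)| := rfl
        _ ≤ A * (1 + ‖x - u‖) ^ (-c) := h
  exact ((step1.trans step3).trans_eq step4).trans step5

end Aux4

section Final
variable {d : ℕ}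

def locSet (f : Euc d → ℝ) (x : Euc d) : Set ℝ :=
  {r | ∃ ψ ∈ calA d, ∃ t, 0 < t ∧ t < 1 ∧ ∃ y, dist y x < t ∧ r = |conv f (dilate ψ t) y|}

lemma locMax_eq_sSup (f : Euc d → ℝ) (x : Euc d) : locMax f x = sSup (locSet f x) := rfl

lemma locMax_lsc (g : Euc d → ℝ) (hbdd : ∀ x, BddAbove (locSet g x)) :
    LowerSemicontinuous (locMax g) := by
  intro x r hr
  rcases lt_or_ge r 0 with h | h
  · refine Eventually.of_forall fun x' => h.trans_le ?_
    rw [locMax_eq_sSup]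
    exact Real.sSup_nonneg fun s hs => by
      obtain ⟨ψ, _, t, _, _, y, _, rfl⟩ := hs; exact abs_nonneg _
  · rw [locMax_eq_sSup] at hr
    have hne : (locSet g x).Nonempty := by
      by_contra hemp
      rw [Set.not_nonempty_iff_eq_empty] at hemp
      rw [hemp, Real.sSup_empty] at hr
      linarith
    obtain ⟨s, hsmem, hrs⟩ := exists_lt_of_lt_csSup hne hr
    obtain ⟨ψ, hψ, t, ht0, ht1, y, hyx, rfl⟩ := hsmem
    have hε : 0 < t - dist y x := sub_pos.2 hyx
    filter_upwards [Metric.ball_mem_nhds x hε] with x' hx'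
    have hdy : dist y x' < t := by
      have h1 := dist_triangle y x x'
      have h2 : dist x x' < t - dist y x := by
        rw [dist_comm]; exact mem_ball.mp hx'
      linarith
    refine hrs.trans_le ?_
    rw [locMax_eq_sSup]
    exact le_csSup (hbdd x') ⟨ψ, hψ, t, ht0, ht1, y, hdy, rfl⟩

theorem goldberg_i' {d : ℕ} (φ : Euc d → ℝ) (hφ : Continuous φ ∧ HasCompactSupport φ)
    (hsupp : tsupport φ ⊆ ball (0 : Euc d) 1) :
    ∃ C : ℝ, 0 < C ∧ ∀ f : Euc d → ℝ, Integrable f →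
      (Integrable (conv φ f) ∧ Integrable (locMax (conv φ f))) ∧
        (∫ x, |locMax (conv φ f) x|) ≤ C * ∫ x, |f x| := by
  obtain ⟨A, hA1, hker⟩ := kernel_bound hφ.1 hφ.2 hsupp
  have hA0 : 0 ≤ A := by linarith
  set K : Euc d → ℝ := fun v => A * (1 + ‖v‖) ^ (-(2 * (d : ℝ) + 2)) with hKdef
  have hKint : Integrable K := by
    refine Integrable.const_mul ?_ A
    refine integrable_one_add_norm ?_
    rw [finrank_euclideanSpace_fin]; push_cast; linarith
  have hKnn : ∀ v, 0 ≤ K v := fun v =>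
    mul_nonneg hA0 (Real.rpow_nonneg (by positivity) _)
  set κ : ℝ := ∫ v : Euc d, K v with hκdef
  have hκ0 : 0 ≤ κ := integral_nonneg hKnn
  refine ⟨κ + 1, by linarith, fun f hf => ?_⟩
  have hφint : Integrable φ := hφ.1.integrable_of_hasCompactSupport hφ.2
  have hgint : Integrable (conv φ f) := by
    rw [conv_eq_convolution]
    exact hφint.integrable_convolution (ContinuousLinearMap.mul ℝ ℝ) hf
  set T : Euc d → ℝ := fun x => ∫ u, |f u| * K (x - u) with hTdef
  have hTconv : T = convolution (fun u => |f u|) K (ContinuousLinearMap.mul ℝ ℝ) volume := rfl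
  have hTint : Integrable T := by
    rw [hTconv]
    exact hf.abs.integrable_convolution (ContinuousLinearMap.mul ℝ ℝ) hKint
  have hTnn : ∀ x, 0 ≤ T x := fun x =>
    integral_nonneg fun u => mul_nonneg (abs_nonneg _) (hKnn _)
  have helem : ∀ x, ∀ r ∈ locSet (conv φ f) x, r ≤ T x := by
    rintro x r ⟨ψ, hψ, t, ht0, ht1, y, hyx, rfl⟩
    exact element_bound hφ.1 hφ.2 hf hker hψ ht0 ht1 hyx
  have hle : ∀ x, locMax (conv φ f) x ≤ T x := fun x => by
    rw [locMax_eq_sSup]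
    exact Real.sSup_le (helem x) (hTnn x)
  have hnn : ∀ x, 0 ≤ locMax (conv φ f) x := fun x => by
    rw [locMax_eq_sSup]
    exact Real.sSup_nonneg fun s hs => by
      obtain ⟨ψ, _, t, _, _, y, _, rfl⟩ := hs; exact abs_nonneg _
  have hbdd : ∀ x, BddAbove (locSet (conv φ f) x) := fun x => ⟨T x, helem x⟩
  have hmeas : Measurable (locMax (conv φ f)) :=
    (locMax_lsc (conv φ f) hbdd).measurable
  have hlocint : Integrable (locMax (conv φ f)) := by
    refine Integrable.mono' hTint hmeas.aestronglyMeasurable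
      (Eventually.of_forall fun x => ?_)
    rw [Real.norm_eq_abs, abs_of_nonneg (hnn x)]
    exact hle x
  refine ⟨⟨hgint, hlocint⟩, ?_⟩
  have h1 : (∫ x, |locMax (conv φ f) x|) = ∫ x, locMax (conv φ f) x := by
    congr 1; ext x; exact abs_of_nonneg (hnn x)
  have h2 : (∫ x, locMax (conv φ f) x) ≤ ∫ x, T x :=
    integral_mono hlocint hTint hle
  have h3 : (∫ x, T x) = (∫ u, |f u|) * κ := by
    rw [hTconv, integral_convolution (ContinuousLinearMap.mul ℝ ℝ) hf.abs hKint]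
    rfl
  have h4 : (0:ℝ) ≤ ∫ u, |f u| := integral_nonneg fun u => abs_nonneg _
  calc (∫ x, |locMax (conv φ f) x|) ≤ (∫ u, |f u|) * κ := by
        rw [h1, ← h3]; exact h2
    _ ≤ (κ + 1) * ∫ x, |f x| := by nlinarith

end Final


/-- Goldberg's lemma (i): for `φ ∈ C_c(ℝ^d)` with `supp φ ⊆ B(0,1)`
and `∫ φ = 1`, there is `C = C(d,φ) > 0` such that `‖φ*f‖_{h¹} ≤ C ‖f‖_{L¹}` for
every `f ∈ L¹(ℝ^d)`. -/
theorem goldberg_i {d : ℕ} (φ : Euc d → ℝ) (hφ : φ ∈ CcFun d)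
    (hsupp : tsupport φ ⊆ ball (0 : Euc d) 1) (hint : ∫ x, φ x = 1) :
    ∃ C : ℝ, 0 < C ∧ ∀ f : Euc d → ℝ, Integrable f →
      Memh1 (conv φ f) ∧ h1norm (conv φ f) ≤ C * ∫ x, |f x| := by
  obtain ⟨C, hC, h⟩ := goldberg_i' φ ⟨hφ.1, hφ.2⟩ hsupp
  exact ⟨C, hC, fun f hf => ⟨⟨(h f hf).1.1, (h f hf).1.2⟩, (h f hf).2⟩⟩
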